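/- If Λ₁ and Λ₂ are covolume-1 lattices in ℝ² with syst(Λ₁) = syst(Λ₂) and Λ₂ hexagonal (i.e. of maximal systole and well-rounded), and the product lattice Λ₁ × Λ₂ ⊂ ℝ⁴ has at least 3 linearly independent minimal vectors, then Λ₁ is also hexagonal. -/

import Mathlib

open Complex

/-- The lattice in ℂ ≅ ℝ² generated by `a` and `b`. -/
noncomputable def latticeOf (a b : ℂ) : AddSubgroup ℂ := AddSubgroup.closure {a, b}

/-- The covolume of the lattice generated by `a` and `b`:
the area of the fundamental parallelogram. -/
noncomputable def covol (a b : ℂ) : ℝ := |((starRingEnd ℂ) a * b).im|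

/-- The systole of a lattice in ℂ: the infimum of the norms of its
nonzero elements. -/
noncomputable def systole (L : AddSubgroup ℂ) : ℝ :=
  sInf {r | ∃ v ∈ L, v ≠ 0 ∧ ‖v‖ = r}

/-- A minimal vector of a lattice: a nonzero vector realizing the systole. -/
def IsMinimalVector (L : AddSubgroup ℂ) (v : ℂ) : Prop :=
  v ∈ L ∧ v ≠ 0 ∧ ‖v‖ = systole L

/-- The scaling factor (2/√3)^{1/2} making the hexagonal lattice have
covolume one. -/
noncomputable def c₀ : ℝ := Real.sqrt (2 / Real.sqrt 3)

/-- The hexagonal lattice `ℤ + ℤ e^{iπ/3}` rescaled to covolume one. -/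
noncomputable def hexLattice : AddSubgroup ℂ :=
  latticeOf c₀ (c₀ * Complex.exp (Real.pi / 3 * Complex.I))

/-- A lattice in ℂ ≅ ℝ² is hexagonal if it is the image of the rescaled
hexagonal lattice under a (linear) isometry of ℝ². -/
def IsHexagonal (L : AddSubgroup ℂ) : Prop :=
  ∃ f : ℂ ≃ₗᵢ[ℝ] ℂ, (L : Set ℂ) = f '' (hexLattice : Set ℂ)

/-- The Euclidean norm on ℝ⁴ = ℝ² ⊕ ℝ² ≅ ℂ × ℂ (orthogonal direct sum). -/
noncomputable def norm4 (v : ℂ × ℂ) : ℝ := Real.sqrt (‖v.1‖ ^ 2 + ‖v.2‖ ^ 2)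

/-- The systole of a lattice in ℝ⁴ ≅ ℂ × ℂ. -/
noncomputable def systole4 (L : AddSubgroup (ℂ × ℂ)) : ℝ :=
  sInf {r | ∃ v ∈ L, v ≠ 0 ∧ norm4 v = r}

/-- A minimal vector of a lattice in ℝ⁴ ≅ ℂ × ℂ. -/
def IsMinimalVector4 (L : AddSubgroup (ℂ × ℂ)) (v : ℂ × ℂ) : Prop :=
  v ∈ L ∧ v ≠ 0 ∧ norm4 v = systole4 L

/-- A lattice in ℝ² ≅ ℂ is well-rounded if its minimal vectors span ℝ². -/
def WellRounded (L : AddSubgroup ℂ) : Prop :=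
  Submodule.span ℝ {v | IsMinimalVector L v} = ⊤

/-! ### Auxiliary lemmas -/

noncomputable def ω : ℂ := ⟨1/2, Real.sqrt 3 / 2⟩

lemma omega_eq : Complex.exp (Real.pi / 3 * Complex.I) = ω := by
  rw [Complex.ext_iff, Complex.exp_re, Complex.exp_im]
  simp [ω, Real.cos_pi_div_three, Real.sin_pi_div_three]

lemma mem_latticeOf {a b x : ℂ} :
    x ∈ latticeOf a b ↔ ∃ m n : ℤ, (m : ℂ) * a + (n : ℂ) * b = x := by
  rw [latticeOf, AddSubgroup.mem_closure_pair]
  simp [zsmul_eq_mul]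

lemma c₀_pos : 0 < c₀ := Real.sqrt_pos.2 (by positivity)
lemma c₀_sq : c₀ ^ 2 = 2 / Real.sqrt 3 := Real.sq_sqrt (by positivity)
lemma sqrt3_sq : Real.sqrt 3 ^ 2 = 3 := Real.sq_sqrt (by norm_num)

lemma c₀_sq_inv : (c₀ ^ 2)⁻¹ = Real.sqrt 3 / 2 := by
  have h3 : (0:ℝ) < Real.sqrt 3 := Real.sqrt_pos.2 (by norm_num)
  have h4 : Real.sqrt 3 * Real.sqrt 3 = 3 := Real.mul_self_sqrt (by norm_num)
  rw [c₀_sq]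
  field_simp

lemma norm_sq_eq (z : ℂ) : ‖z‖ ^ 2 = z.re ^ 2 + z.im ^ 2 := by
  rw [Complex.sq_norm, Complex.normSq_apply]; ring

lemma Q_ge (m n : ℤ) (h : ¬(m = 0 ∧ n = 0)) : 1 ≤ m ^ 2 + m * n + n ^ 2 := by
  by_contra hc
  push_neg at hc
  have h1 : (2*m+n)^2 + 3*n^2 ≤ 0 := by nlinarith
  have hn : n = 0 := by nlinarith [sq_nonneg (2*m+n), sq_nonneg n]
  subst hn
  have hm : m = 0 := by nlinarith [sq_nonneg m]
  exact h ⟨hm, rfl⟩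

lemma hex_norm_sq (m n : ℤ) :
    ‖(m : ℂ) * c₀ + (n : ℂ) * ((c₀ : ℂ) * ω)‖ ^ 2 = c₀ ^ 2 * ((m:ℝ)^2 + m*n + n^2) := by
  rw [norm_sq_eq]
  simp only [Complex.add_re, Complex.add_im, Complex.mul_re, Complex.mul_im,
    Complex.intCast_re, Complex.intCast_im, Complex.ofReal_re, Complex.ofReal_im, ω]
  have h3 := sqrt3_sq
  nlinarith [h3]

lemma systole_le {L : AddSubgroup ℂ} {v : ℂ} (hv : v ∈ L) (h0 : v ≠ 0) :
    systole L ≤ ‖v‖ := by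
  apply csInf_le
  · exact ⟨0, by rintro r ⟨w, _, _, rfl⟩; positivity⟩
  · exact ⟨v, hv, h0, rfl⟩

lemma systole4_le {L : AddSubgroup (ℂ × ℂ)} {v : ℂ × ℂ} (hv : v ∈ L) (h0 : v ≠ 0) :
    systole4 L ≤ norm4 v := by
  apply csInf_le
  · exact ⟨0, by rintro r ⟨w, _, _, rfl⟩; exact Real.sqrt_nonneg _⟩
  · exact ⟨v, hv, h0, rfl⟩

lemma hex_lower {x : ℂ} (hx : x ∈ hexLattice) (h0 : x ≠ 0) : c₀ ≤ ‖x‖ := by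
  rw [hexLattice, omega_eq, mem_latticeOf] at hx
  obtain ⟨m, n, rfl⟩ := hx
  have hmn : ¬(m = 0 ∧ n = 0) := by
    rintro ⟨rfl, rfl⟩; simp at h0
  have hQ : (1 : ℝ) ≤ (m:ℝ)^2 + m*n + n^2 := by exact_mod_cast Q_ge m n hmn
  have h1 := hex_norm_sq m n
  nlinarith [norm_nonneg ((m : ℂ) * c₀ + (n : ℂ) * ((c₀ : ℂ) * ω)), c₀_pos]

lemma c₀_mem_hex : (c₀ : ℂ) ∈ hexLattice := by
  rw [hexLattice, omega_eq, mem_latticeOf]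
  exact ⟨1, 0, by simp⟩

lemma systole_hex : systole hexLattice = c₀ := by
  apply le_antisymm
  · have := systole_le c₀_mem_hex (by exact_mod_cast c₀_pos.ne')
    simpa [Complex.norm_real, abs_of_pos c₀_pos] using this
  · apply le_csInf
    · exact ⟨c₀, (c₀:ℂ), c₀_mem_hex, by exact_mod_cast c₀_pos.ne',
        by simp [Complex.norm_real, abs_of_pos c₀_pos]⟩
    rintro r ⟨v, hv, h0, rfl⟩
    exact hex_lower hv h0

lemma im_conj_comb (a b : ℂ) (m n p q : ℤ) :
    ((starRingEnd ℂ) ((m:ℂ)*a + n*b) * ((p:ℂ)*a + q*b)).im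
      = ((m:ℝ)*q - n*p) * ((starRingEnd ℂ) a * b).im := by
  simp only [map_add, map_mul, Complex.add_re, Complex.add_im, Complex.mul_re, Complex.mul_im,
    Complex.intCast_re, Complex.intCast_im, Complex.conj_re, Complex.conj_im,
    map_intCast]
  ring

lemma div_im_eq (u v : ℂ) :
    (v / u).im = ((starRingEnd ℂ) u * v).im / Complex.normSq u := by
  rw [Complex.div_im, Complex.mul_im, Complex.conj_re, Complex.conj_im]
  ring

/-- Norms behave under isometric images of lattices. -/
lemma systole_congr {L M : AddSubgroup ℂ} (f : ℂ ≃ₗᵢ[ℝ] ℂ)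
    (h : (L : Set ℂ) = f '' (M : Set ℂ)) : systole L = systole M := by
  unfold systole
  congr 1
  ext r
  constructor
  · rintro ⟨v, hv, h0, rfl⟩
    have : v ∈ f '' (M : Set ℂ) := h ▸ hv
    obtain ⟨w, hw, rfl⟩ := this
    refine ⟨w, hw, ?_, (f.norm_map w).symm⟩
    rintro rfl; simp at h0
  · rintro ⟨w, hw, h0, rfl⟩
    refine ⟨f w, ?_, ?_, f.norm_map w⟩
    · have : f w ∈ f '' (M : Set ℂ) := ⟨w, hw, rfl⟩
      rw [← h] at this; exact this
    · simpa using fun hw0 => h0 (by simpa using congrArg f.symm (by simpa using hw0))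

lemma image_latticeOf (f : ℂ ≃ₗᵢ[ℝ] ℂ) (a b : ℂ) :
    f '' (latticeOf a b : Set ℂ) = (latticeOf (f a) (f b) : Set ℂ) := by
  ext x
  constructor
  · rintro ⟨y, hy, rfl⟩
    rw [SetLike.mem_coe, latticeOf, AddSubgroup.mem_closure_pair] at hy ⊢
    obtain ⟨m, n, rfl⟩ := hy
    exact ⟨m, n, by rw [map_add, map_zsmul, map_zsmul]⟩
  · intro hx
    rw [SetLike.mem_coe, latticeOf, AddSubgroup.mem_closure_pair] at hx
    obtain ⟨m, n, rfl⟩ := hx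
    refine ⟨m • a + n • b, ?_, by rw [map_add, map_zsmul, map_zsmul]⟩
    rw [SetLike.mem_coe, latticeOf, AddSubgroup.mem_closure_pair]
    exact ⟨m, n, rfl⟩

lemma conj_omega : (starRingEnd ℂ) ω = ⟨1/2, -(Real.sqrt 3 / 2)⟩ := by
  rw [Complex.ext_iff]
  simp [ω]

set_option maxHeartbeats 2000000 in
/-- The key classification: a covolume-one lattice containing a vector of
norm `c₀`, all of whose nonzero vectors have norm at least `c₀`, is hexagonal. -/
lemma key (a b u : ℂ) (hcov : covol a b = 1) (hu : u ∈ latticeOf a b) (hu0 : u ≠ 0)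
    (hnorm : ‖u‖ = c₀) (hlb : ∀ v ∈ latticeOf a b, v ≠ 0 → c₀ ≤ ‖v‖) :
    IsHexagonal (latticeOf a b) := by
  classical
  obtain ⟨m, n, hmn⟩ := mem_latticeOf.1 hu
  have hmn0 : ¬(m = 0 ∧ n = 0) := by
    rintro ⟨rfl, rfl⟩
    apply hu0
    rw [← hmn]; simp
  -- primitivity: gcd m n = 1
  obtain ⟨g, hgdef⟩ : ∃ g : ℕ, g = Int.gcd m n := ⟨_, rfl⟩
  have hgm : ((g : ℤ)) ∣ m := hgdef ▸ Int.gcd_dvd_left m n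
  have hgn : ((g : ℤ)) ∣ n := hgdef ▸ Int.gcd_dvd_right m n
  obtain ⟨m', hm'⟩ := hgm
  obtain ⟨n', hn'⟩ := hgn
  have hu₀mem : ((m':ℂ)*a + n'*b) ∈ latticeOf a b := mem_latticeOf.2 ⟨m', n', rfl⟩
  have hu_eq : u = ((g : ℕ):ℂ) * ((m':ℂ)*a + n'*b) := by
    rw [← hmn, hm', hn']; push_cast; ring
  have hu₀0 : ((m':ℂ)*a + n'*b) ≠ 0 := by
    intro h; apply hu0; rw [hu_eq, h, mul_zero]
  have hnu₀ : c₀ ≤ ‖(m':ℂ)*a + n'*b‖ := hlb _ hu₀mem hu₀0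
  have hgnorm : ‖u‖ = (g : ℝ) * ‖(m':ℂ)*a + n'*b‖ := by
    rw [hu_eq, norm_mul, Complex.norm_natCast]
  have hg1 : g = 1 := by
    by_contra hne
    have hg0 : g ≠ 0 := by
      intro h
      rw [h] at hgdef
      have := Int.gcd_eq_zero_iff.1 hgdef.symm
      exact hmn0 ⟨this.1, this.2⟩
    have h2 : 2 ≤ (g : ℝ) := by exact_mod_cast (by omega : 2 ≤ g)
    nlinarith [c₀_pos, hnorm]
  -- Bezout
  obtain ⟨q, hqdef⟩ : ∃ q : ℤ, q = Int.gcdA m n := ⟨_, rfl⟩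
  obtain ⟨p, hpdef⟩ : ∃ p : ℤ, p = -(Int.gcdB m n) := ⟨_, rfl⟩
  have hdet : m * q - n * p = 1 := by
    have hB := Int.gcd_eq_gcd_ab m n
    rw [← hgdef, hg1] at hB
    push_cast at hB
    rw [hqdef, hpdef]
    linear_combination -hB
  obtain ⟨v, hv⟩ : ∃ v : ℂ, v = (p:ℂ)*a + q*b := ⟨_, rfl⟩
  have hvmem : v ∈ latticeOf a b := by
    rw [hv]; exact mem_latticeOf.2 ⟨p, q, rfl⟩
  have him : ((starRingEnd ℂ) u * v).im = ((starRingEnd ℂ) a * b).im := by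
    rw [← hmn, hv, im_conj_comb]
    have h1 : ((m:ℝ)*q - n*p) = 1 := by exact_mod_cast hdet
    rw [h1, one_mul]
  have habs : |((starRingEnd ℂ) u * v).im| = 1 := by rw [him]; exact hcov
  have hnsq : Complex.normSq u = c₀ ^ 2 := by
    rw [← Complex.sq_norm, hnorm]
  obtain ⟨z, hz⟩ : ∃ z : ℂ, z = v / u := ⟨_, rfl⟩
  have himz : |z.im| = Real.sqrt 3 / 2 := by
    rw [hz, div_im_eq, hnsq, abs_div, habs, _root_.abs_of_pos (pow_pos c₀_pos 2)]
    rw [one_div, c₀_sq_inv]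
  obtain ⟨k, hk⟩ : ∃ k : ℤ, k = ⌊z.re + 1/2⌋ := ⟨_, rfl⟩
  obtain ⟨z', hz'⟩ : ∃ z' : ℂ, z' = z - k := ⟨_, rfl⟩
  have hre'₁ : -(1/2) ≤ z'.re := by
    have h1 := Int.floor_le (z.re + 1/2)
    rw [← hk] at h1
    simp only [hz', Complex.sub_re, Complex.intCast_re]
    linarith
  have hre'₂ : z'.re < 1/2 := by
    have h2 := Int.lt_floor_add_one (z.re + 1/2)
    rw [← hk] at h2
    simp only [hz', Complex.sub_re, Complex.intCast_re]
    linarith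
  have him' : z'.im = z.im := by simp [hz', Complex.sub_im]
  obtain ⟨v', hv'⟩ : ∃ v' : ℂ, v' = v - (k:ℂ) * u := ⟨_, rfl⟩
  have hv'mem : v' ∈ latticeOf a b := by
    apply mem_latticeOf.2 ⟨p - k*m, q - k*n, ?_⟩
    rw [hv', hv, ← hmn]; push_cast; ring
  have hveq : v = z * u := by rw [hz, div_mul_cancel₀ v hu0]
  have hv'eq : v' = z' * u := by rw [hv', hz', hveq]; ring
  have hzim0 : z.im ≠ 0 := by
    intro h
    rw [h, abs_zero] at himz
    have : (0:ℝ) < Real.sqrt 3 / 2 := by positivity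
    linarith
  have hz'0 : z' ≠ 0 := by
    intro h
    apply hzim0
    rw [← him', h]; simp
  have hv'0 : v' ≠ 0 := by rw [hv'eq]; exact mul_ne_zero hz'0 hu0
  have hlbv' : c₀ ≤ ‖v'‖ := hlb _ hv'mem hv'0
  have hnormv' : ‖v'‖^2 = (z'.re^2 + z'.im^2) * c₀^2 := by
    rw [hv'eq, norm_mul, mul_pow, hnorm, norm_sq_eq]
  have hsq2 : c₀^2 ≤ ‖v'‖^2 := pow_le_pow_left₀ c₀_pos.le hlbv' 2
  have h1le : 1 ≤ z'.re^2 + z'.im^2 := by nlinarith [pow_pos c₀_pos 2]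
  have him2 : z'.im^2 = 3/4 := by
    have h3 := sqrt3_sq
    have : z'.im^2 = (Real.sqrt 3 / 2)^2 := by
      rw [← _root_.sq_abs, him', himz]
    rw [this]; nlinarith
  have hre : z'.re = -(1/2) := by
    have hsq : 1/4 ≤ z'.re^2 := by linarith
    have hle : z'.re ≤ -(1/2) := by
      by_contra hgt
      push_neg at hgt
      nlinarith [mul_pos (by linarith : (0:ℝ) < 1/2 - z'.re) (by linarith : (0:ℝ) < 1/2 + z'.re)]
    linarith
  obtain ⟨w, hw⟩ : ∃ w : ℂ, w = z' + 1 := ⟨_, rfl⟩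
  have hwre : w.re = 1/2 := by
    simp only [hw, Complex.add_re, Complex.one_re, hre]; norm_num
  have hwim : w.im = z.im := by
    simp only [hw, Complex.add_im, Complex.one_im, him', add_zero]
  obtain ⟨v'', hv''⟩ : ∃ v'' : ℂ, v'' = v' + u := ⟨_, rfl⟩
  have hv''mem : v'' ∈ latticeOf a b := by
    rw [hv'']; exact add_mem hv'mem hu
  have hv''eq : v'' = w * u := by rw [hv'', hv'eq, hw]; ring
  have hdetC : (m:ℂ)*q - n*p = 1 := by exact_mod_cast hdet
  have hueq : u = (m:ℂ)*a + n*b := hmn.symm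
  have hv''ab : v'' = (((p + (1-k)*m : ℤ)):ℂ)*a + (((q + (1-k)*n : ℤ)):ℂ)*b := by
    rw [hv'', hv', hv, ← hmn]; push_cast; ring
  have hLeq : latticeOf a b = latticeOf u v'' := by
    apply le_antisymm
    · rw [show latticeOf a b = AddSubgroup.closure {a, b} from rfl]
      apply (AddSubgroup.closure_le _).2
      rintro x hx
      simp only [Set.mem_insert_iff, Set.mem_singleton_iff] at hx
      rcases hx with rfl | rfl
      · apply mem_latticeOf.2 ⟨q + (1-k)*n, -n, ?_⟩
        rw [hueq, hv''ab]; push_cast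
        linear_combination x * hdetC
      · apply mem_latticeOf.2 ⟨-(p + (1-k)*m), m, ?_⟩
        rw [hueq, hv''ab]; push_cast
        linear_combination x * hdetC
    · rw [show latticeOf u v'' = AddSubgroup.closure {u, v''} from rfl]
      apply (AddSubgroup.closure_le _).2
      rintro x hx
      simp only [Set.mem_insert_iff, Set.mem_singleton_iff] at hx
      rcases hx with rfl | rfl
      · exact hu
      · exact hv''mem
  have hc₀C : ((c₀:ℝ):ℂ) ≠ 0 := by
    exact_mod_cast c₀_pos.ne'
  have hcirc : ‖u / ((c₀:ℝ):ℂ)‖ = 1 := by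
    rw [norm_div, hnorm, Complex.norm_real, Real.norm_eq_abs, _root_.abs_of_pos c₀_pos]
    exact div_self c₀_pos.ne'
  obtain ⟨cU, hcU⟩ : ∃ cU : Circle, (cU : ℂ) = u / ((c₀:ℝ):ℂ) :=
    ⟨⟨u / ((c₀:ℝ):ℂ), by simp [Submonoid.unitSphere, mem_sphere_zero_iff_norm, hcirc, hnorm, abs_of_pos c₀_pos, c₀_pos.ne']⟩, rfl⟩
  have hexset : (hexLattice : Set ℂ) = (latticeOf ((c₀:ℝ):ℂ) (((c₀:ℝ):ℂ)*ω) : Set ℂ) := by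
    rw [hexLattice, omega_eq]
  have hzim : z.im = Real.sqrt 3/2 ∨ z.im = -(Real.sqrt 3/2) := by
    rcases (_root_.abs_eq (by positivity : (0:ℝ) ≤ Real.sqrt 3 / 2)).mp himz with h | h
    · left; linarith
    · right; linarith
  rcases hzim with hzpos | hzneg
  · refine ⟨rotation cU, ?_⟩
    rw [hexset, image_latticeOf]
    have e1 : rotation cU ((c₀:ℝ):ℂ) = u := by
      rw [rotation_apply, hcU]
      exact div_mul_cancel₀ u hc₀C
    have hwω : w = ω := by
      rw [Complex.ext_iff]
      constructor
      · rw [hwre]; simp [ω]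
      · rw [hwim, hzpos]; simp [ω]
    have e2 : rotation cU (((c₀:ℝ):ℂ)*ω) = v'' := by
      rw [rotation_apply, hcU, ← mul_assoc, div_mul_cancel₀ u hc₀C, hv''eq, hwω, mul_comm]
    rw [e1, e2, hLeq]
  · refine ⟨conjLIE.trans (rotation cU), ?_⟩
    rw [hexset, image_latticeOf]
    have e1 : (conjLIE.trans (rotation cU)) ((c₀:ℝ):ℂ) = u := by
      rw [LinearIsometryEquiv.trans_apply, conjLIE_apply, Complex.conj_ofReal,
        rotation_apply, hcU]
      exact div_mul_cancel₀ u hc₀C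
    have hwω : w = (starRingEnd ℂ) ω := by
      rw [conj_omega, Complex.ext_iff]
      exact ⟨by rw [hwre], by rw [hwim, hzneg]⟩
    have e2 : (conjLIE.trans (rotation cU)) (((c₀:ℝ):ℂ)*ω) = v'' := by
      rw [LinearIsometryEquiv.trans_apply, conjLIE_apply, map_mul, Complex.conj_ofReal,
        rotation_apply, hcU, ← mul_assoc, div_mul_cancel₀ u hc₀C, hv''eq, hwω, mul_comm]
    rw [e1, e2, hLeq]

lemma norm4_pair_left (u : ℂ) : norm4 (u, (0:ℂ)) = ‖u‖ := by
  rw [norm4]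
  simp [Real.sqrt_sq (norm_nonneg u)]

lemma norm4_pair_right (u : ℂ) : norm4 ((0:ℂ), u) = ‖u‖ := by
  rw [norm4]
  simp [Real.sqrt_sq (norm_nonneg u)]

set_option maxHeartbeats 1000000 in
/-- If Λ₁ and Λ₂ are covolume-1 lattices in ℝ² with equal systoles, Λ₂ is
hexagonal, and the orthogonal product Λ₁ × Λ₂ ⊂ ℝ⁴ has at least three
linearly independent minimal vectors, then Λ₁ is hexagonal as well. -/
theorem hexagonal_of_three_independent_minimal_vectors (a b c d : ℂ)
    (hcov₁ : covol a b = 1) (hcov₂ : covol c d = 1)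
    (hsyst : systole (latticeOf a b) = systole (latticeOf c d))
    (hhex₂ : IsHexagonal (latticeOf c d))
    (hind : ∃ v₁ v₂ v₃ : ℂ × ℂ,
        IsMinimalVector4 ((latticeOf a b).prod (latticeOf c d)) v₁ ∧
        IsMinimalVector4 ((latticeOf a b).prod (latticeOf c d)) v₂ ∧
        IsMinimalVector4 ((latticeOf a b).prod (latticeOf c d)) v₃ ∧
        LinearIndependent ℝ ![v₁, v₂, v₃]) :
    IsHexagonal (latticeOf a b) := by
  obtain ⟨f₂, hf₂⟩ := hhex₂
  have hs₂ : systole (latticeOf c d) = c₀ := by rw [systole_congr f₂ hf₂, systole_hex]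
  have hs₁ : systole (latticeOf a b) = c₀ := by rw [hsyst, hs₂]
  have hlb : ∀ v ∈ latticeOf a b, v ≠ 0 → c₀ ≤ ‖v‖ := fun v hv h0 => hs₁ ▸ systole_le hv h0
  -- an element of Λ₂ of norm c₀
  have hc0mem₂ : f₂ ((c₀:ℝ):ℂ) ∈ latticeOf c d := by
    rw [← SetLike.mem_coe, hf₂]
    exact ⟨(c₀:ℝ), c₀_mem_hex, rfl⟩
  have hw₂norm : ‖f₂ ((c₀:ℝ):ℂ)‖ = c₀ := by
    rw [f₂.norm_map, Complex.norm_real, Real.norm_eq_abs, _root_.abs_of_pos c₀_pos]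
  have hw₂0 : f₂ ((c₀:ℝ):ℂ) ≠ 0 := by
    intro h
    rw [h, norm_zero] at hw₂norm
    exact c₀_pos.ne hw₂norm
  have hsys4le : systole4 ((latticeOf a b).prod (latticeOf c d)) ≤ c₀ := by
    have hmem : ((0:ℂ), f₂ ((c₀:ℝ):ℂ)) ∈ (latticeOf a b).prod (latticeOf c d) :=
      AddSubgroup.mem_prod.2 ⟨zero_mem _, hc0mem₂⟩
    have hne : ((0:ℂ), f₂ ((c₀:ℝ):ℂ)) ≠ 0 := by
      intro h
      exact hw₂0 (congrArg Prod.snd h)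
    have := systole4_le hmem hne
    rwa [norm4_pair_right, hw₂norm] at this
  have hzero : ∀ v : ℂ × ℂ, IsMinimalVector4 ((latticeOf a b).prod (latticeOf c d)) v →
      v.1 = 0 ∨ v.2 = 0 := by
    rintro v ⟨hvmem, hv0, hvnorm⟩
    by_contra hc
    push_neg at hc
    obtain ⟨hc1, hc2⟩ := hc
    have hm := AddSubgroup.mem_prod.1 hvmem
    have h1 : c₀ ≤ ‖v.1‖ := hlb _ hm.1 hc1
    have h2 : c₀ ≤ ‖v.2‖ := by
      have := systole_le hm.2 hc2
      rw [hs₂] at this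
      exact this
    have hsq : norm4 v ^ 2 = ‖v.1‖^2 + ‖v.2‖^2 := Real.sq_sqrt (by positivity)
    have hle : norm4 v ≤ c₀ := hvnorm ▸ hsys4le
    have hnn : 0 ≤ norm4 v := Real.sqrt_nonneg _
    nlinarith [c₀_pos]
  have hget : ∀ v : ℂ × ℂ, IsMinimalVector4 ((latticeOf a b).prod (latticeOf c d)) v →
      v.1 ≠ 0 → ∃ u : ℂ, u ∈ latticeOf a b ∧ u ≠ 0 ∧ ‖u‖ = c₀ := by
    rintro v hv hv1
    obtain ⟨hvmem, hv0, hvnorm⟩ := hv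
    have h2 : v.2 = 0 := (hzero v ⟨hvmem, hv0, hvnorm⟩).resolve_left hv1
    have hm := AddSubgroup.mem_prod.1 hvmem
    have hnn : norm4 v = ‖v.1‖ := by
      have : v = (v.1, (0:ℂ)) := by rw [← h2]
      rw [this, norm4_pair_left]
    refine ⟨v.1, hm.1, hv1, le_antisymm ?_ (hlb _ hm.1 hv1)⟩
    rw [← hnn, hvnorm]
    exact hsys4le
  obtain ⟨v₁, v₂, v₃, h₁, h₂, h₃, hli⟩ := hind
  have hnotall : ¬(v₁.1 = 0 ∧ v₂.1 = 0 ∧ v₃.1 = 0) := by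
    rintro ⟨e₁, e₂, e₃⟩
    have hfun : ![v₁, v₂, v₃] = (LinearMap.inr ℝ ℂ ℂ) ∘ ![v₁.2, v₂.2, v₃.2] := by
      funext i
      fin_cases i <;> simp [LinearMap.inr_apply] <;> rw [Prod.ext_iff] <;>
        simp [e₁, e₂, e₃]
    have hli' : LinearIndependent ℝ ![v₁.2, v₂.2, v₃.2] := by
      apply LinearIndependent.of_comp (LinearMap.inr ℝ ℂ ℂ)
      rw [← hfun]
      exact hli
    have hcard := hli'.fintype_card_le_finrank
    rw [Complex.finrank_real_complex] at hcard
    simp at hcard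
  have key_u : ∃ u : ℂ, u ∈ latticeOf a b ∧ u ≠ 0 ∧ ‖u‖ = c₀ := by
    by_cases e₁ : v₁.1 = 0
    · by_cases e₂ : v₂.1 = 0
      · by_cases e₃ : v₃.1 = 0
        · exact absurd ⟨e₁, e₂, e₃⟩ hnotall
        · exact hget v₃ h₃ e₃
      · exact hget v₂ h₂ e₂
    · exact hget v₁ h₁ e₁
  obtain ⟨u, hu, hu0, hun⟩ := key_u
  exact key a b u hcov₁ hu hu0 hun hlb
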